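/- Let f : X → Y be a universally subtrusive morphism of schemes and let {y_α} be a finite chain of points of Y under specialization. Then there exists a chain {x_α} in X with f(x_α) = y_α for all α. -/

import Mathlib

open AlgebraicGeometry CategoryTheory Topology TopologicalSpace Set

universe u

def IsRetrocompact' {X : Type*} [TopologicalSpace X] (s : Set X) : Prop :=
  ∀ U : Set X, IsOpen U → IsCompact U → IsCompact (s ∩ U)

/-- The constructible (patch) topology. -/
def constructibleTop (X : Type*) [TopologicalSpace X] : TopologicalSpace X :=
  TopologicalSpace.generateFrom
    {s | (IsOpen s ∧ IsRetrocompact' s) ∨ (∃ u : Set X, IsOpen u ∧ IsRetrocompact' u ∧ s = uᶜ)}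

/-- Subtrusive morphisms. -/
def Subtrusive : MorphismProperty Scheme.{u} := fun X Y f =>
  (∀ y y' : Y, y' ⤳ y → ∃ x x' : X, x' ⤳ x ∧ f.base x = y ∧ f.base x' = y') ∧
  @IsQuotientMap _ _ (constructibleTop X) (constructibleTop Y) f.base

section AuxiliaryLemmas

open IsLocalRing

section RadicalPrime

variable {W : Type*} [CommRing W] [IsDomain W] [ValuationRing W]

/-- In a valuation ring, the radical of a proper ideal is prime. -/
lemma ValuationRing.radical_isPrime {I : Ideal W} (hI : I ≠ ⊤) : I.radical.IsPrime := by
  constructor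
  · intro h
    exact hI (Ideal.radical_eq_top.mp h)
  · intro a b hab
    obtain ⟨c, hc | hc⟩ := ValuationRing.cond a b
    · right
      have hb : b ^ 2 = (a * b) * c := by rw [← hc]; ring
      exact Ideal.mem_radical_of_pow_mem (hb ▸ Ideal.mul_mem_right _ _ hab)
    · left
      have ha : a ^ 2 = (a * b) * c := by rw [← hc]; ring
      exact Ideal.mem_radical_of_pow_mem (ha ▸ Ideal.mul_mem_right _ _ hab)

/-- Every element of `p.map h` lies in a principal ideal generated by the image of one
element of `p`, when the target is a valuation ring. -/
lemma ValuationRing.exists_span_of_mem_map {V : Type*} [CommRing V] (h : V →+* W)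
    {p : Ideal V} {x : W} (hx : x ∈ p.map h) : ∃ π ∈ p, x ∈ Ideal.span {h π} := by
  refine Submodule.span_induction ?_ ?_ ?_ ?_ hx
  · rintro y ⟨π, hπ, rfl⟩
    exact ⟨π, hπ, Ideal.subset_span rfl⟩
  · exact ⟨0, p.zero_mem, by simp⟩
  · rintro x y - - ⟨π, hπ, hx⟩ ⟨σ, hσ, hy⟩
    obtain ⟨c, hc | hc⟩ := ValuationRing.cond (h π) (h σ)
    · refine ⟨π, hπ, Ideal.add_mem _ hx ?_⟩
      have hle : Ideal.span {h σ} ≤ Ideal.span {h π} := by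
        rw [Ideal.span_singleton_le_span_singleton]
        exact ⟨c, hc.symm⟩
      exact hle hy
    · refine ⟨σ, hσ, Ideal.add_mem _ ?_ hy⟩
      have hle : Ideal.span {h π} ≤ Ideal.span {h σ} := by
        rw [Ideal.span_singleton_le_span_singleton]
        exact ⟨c, hc.symm⟩
      exact hle hx
  · rintro a x - ⟨π, hπ, hx⟩
    exact ⟨π, hπ, by simpa using Ideal.mul_mem_left _ a hx⟩

/-- Key lemma: for an injective local homomorphism of valuation rings, every prime of the
source is the contraction of a prime of the target, namely the radical of its extension. -/
lemma ValuationRing.radical_map_isPrime_and_comap {V : Type*} [CommRing V] [IsDomain V]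
    [ValuationRing V] (h : V →+* W) (hinj : Function.Injective h) (hloc : IsLocalHom h)
    (p : Ideal V) (hp : p.IsPrime) :
    ((p.map h).radical).IsPrime ∧ ((p.map h).radical).comap h = p := by
  have hmapne : p.map h ≠ ⊤ := by
    intro htop
    obtain ⟨π, hπ, hone⟩ := ValuationRing.exists_span_of_mem_map h
      (htop ▸ Submodule.mem_top : (1 : W) ∈ p.map h)
    rw [Ideal.mem_span_singleton] at hone
    obtain ⟨c, hc⟩ := hone
    have : IsUnit (h π) := IsUnit.of_mul_eq_one _ hc.symm
    exact hp.ne_top (p.eq_top_of_isUnit_mem hπ (hloc.1 _ this))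
  refine ⟨ValuationRing.radical_isPrime hmapne, le_antisymm ?_ ?_⟩
  · intro v hv
    rw [Ideal.mem_comap, Ideal.mem_radical_iff] at hv
    obtain ⟨k, hk⟩ := hv
    obtain ⟨π, hπ, hspan⟩ := ValuationRing.exists_span_of_mem_map h hk
    rw [Ideal.mem_span_singleton] at hspan
    obtain ⟨c, hc⟩ := hspan
    by_cases hv0 : v = 0
    · simpa [hv0] using p.zero_mem
    obtain ⟨d, hd | hd⟩ := ValuationRing.cond (v ^ k) π
    · -- v ^ k * d = π
      have hmul : h (v ^ k) * (h d * c) = h (v ^ k) * 1 := by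
        rw [mul_one, ← mul_assoc, ← map_mul, hd, ← hc, map_pow]
      have hne : h (v ^ k) ≠ 0 := by
        simp only [ne_eq, map_eq_zero_iff _ hinj]
        exact pow_ne_zero _ hv0
      have : h d * c = 1 := mul_left_cancel₀ hne hmul
      have hdu : IsUnit d := hloc.1 _ (IsUnit.of_mul_eq_one _ this)
      have hmem : v ^ k * d ∈ p := hd ▸ hπ
      rcases hp.mem_or_mem hmem with hmem' | hmem'
      · exact hp.mem_of_pow_mem _ hmem'
      · exact absurd (p.eq_top_of_isUnit_mem hmem' hdu) hp.ne_top
    · -- π * d = v ^ k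
      have : v ^ k ∈ p := hd ▸ Ideal.mul_mem_right _ _ hπ
      exact hp.mem_of_pow_mem _ this
  · intro v hv
    exact Ideal.mem_comap.mpr (Ideal.le_radical (Ideal.mem_map_of_mem h hv))

end RadicalPrime

section ChainVR

/-- Data of a valuation ring lying over a chain of primes. -/
structure ChainVR {R : Type u} [CommRing R] {n : ℕ} (p : Fin n → Ideal R) where
  V : Type u
  [commRing : CommRing V]
  [isDomain : IsDomain V]
  [valuationRing : ValuationRing V]
  ρ : R →+* V
  P : Fin n → Ideal V
  prime : ∀ i, (P i).IsPrime
  chain : ∀ i j : Fin n, i ≤ j → P j ≤ P i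
  comap_eq : ∀ i, (P i).comap ρ = p i
  htop : ∀ h : 0 < n, P ⟨0, h⟩ = IsLocalRing.maximalIdeal V

attribute [instance] ChainVR.commRing ChainVR.isDomain ChainVR.valuationRing

/-- Any finite chain of primes is the contraction of a chain of primes of a valuation ring. -/
lemma ChainVR.exists_chainVR {R : Type u} [CommRing R] : ∀ (n : ℕ) (p : Fin (n + 1) → Ideal R),
    (∀ i, (p i).IsPrime) → (∀ i j : Fin (n + 1), i ≤ j → p j ≤ p i) → Nonempty (ChainVR p) := by
  intro n
  induction n with
  | zero =>
    intro p hp hc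
    haveI := hp 0
    let V := FractionRing (R ⧸ p 0)
    let ρ : R →+* V := (algebraMap (R ⧸ p 0) V).comp (Ideal.Quotient.mk (p 0))
    have hbot : IsLocalRing.maximalIdeal V = ⊥ := by
      ext x
      simp [IsLocalRing.mem_maximalIdeal, mem_nonunits_iff, isUnit_iff_ne_zero, not_not]
      exact not_iff_comm.mpr (isUnit_iff_ne_zero (a := x)).symm
    have hker : ∀ i : Fin 1, (IsLocalRing.maximalIdeal V).comap ρ = p i := by
      intro i
      rw [hbot]
      have : (⊥ : Ideal V).comap ρ = RingHom.ker ρ := rfl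
      rw [this]
      have : RingHom.ker ρ = p 0 := by
        ext r
        simp only [RingHom.mem_ker, ρ, RingHom.comp_apply]
        rw [map_eq_zero_iff _ (IsFractionRing.injective (R ⧸ p 0) V),
          Ideal.Quotient.eq_zero_iff_mem]
      rw [this, Subsingleton.elim i 0]
    exact ⟨{
      V := V
      ρ := ρ
      P := fun _ => IsLocalRing.maximalIdeal V
      prime := fun _ => by rw [hbot]; exact Ideal.bot_prime
      chain := fun _ _ _ => le_rfl
      comap_eq := hker
      htop := fun _ => rfl }⟩
  | succ n ih =>
    intro p hp hc
    obtain ⟨D⟩ := ih (fun i => p i.succ) (fun i => hp i.succ)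
      (fun i j hij => hc i.succ j.succ (Fin.succ_le_succ_iff.mpr hij))
    letI : IsLocalRing D.V := ValuationRing.isLocalRing D.V
    let k' := IsLocalRing.ResidueField D.V
    let π' : D.V →+* k' := IsLocalRing.residue D.V
    let ρ'' : R →+* k' := π'.comp D.ρ
    have hker : RingHom.ker ρ'' = p (0 : Fin (n + 1)).succ := by
      have h0 := D.htop (Nat.succ_pos n)
      have : (⟨0, Nat.succ_pos n⟩ : Fin (n + 1)) = 0 := rfl
      rw [this] at h0
      ext r
      simp only [RingHom.mem_ker, RingHom.comp_apply, ρ'']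
      rw [show (π' (D.ρ r) = 0) ↔ D.ρ r ∈ IsLocalRing.maximalIdeal D.V from
        Ideal.Quotient.eq_zero_iff_mem, ← h0, ← Ideal.mem_comap, D.comap_eq 0]
    let A : Subring k' := ρ''.range
    let P' : Ideal A := (p 0).map ρ''.rangeRestrict
    have hkerle : RingHom.ker ρ''.rangeRestrict ≤ p 0 := by
      rw [RingHom.ker_rangeRestrict, hker]
      exact hc 0 (0 : Fin (n+1)).succ (by simp [Fin.le_def])
    haveI hP' : P'.IsPrime := by
      haveI := hp 0
      exact Ideal.map_isPrime_of_surjective ρ''.rangeRestrict_surjective hkerle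
    have hcomapP' : P'.comap ρ''.rangeRestrict = p 0 := by
      rw [Ideal.comap_map_of_surjective _ ρ''.rangeRestrict_surjective]
      exact sup_eq_left.mpr hkerle
    obtain ⟨B0, hB0le, hB0loc⟩ := (LocalSubring.ofPrime A P').exists_le_valuationSubring
    have hAL : A ≤ (LocalSubring.ofPrime A P').toSubring := LocalSubring.le_ofPrime A P'
    have hAB : ∀ r : R, ρ'' r ∈ B0.toSubring := fun r => hB0le (hAL ⟨r, rfl⟩)
    let Vsub : Subring D.V := B0.toSubring.comap π'
    have hmem : ∀ v : D.V, v ∈ Vsub ↔ π' v ∈ B0.toSubring := fun v => Iff.rfl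
    have hmV : ∀ v ∈ IsLocalRing.maximalIdeal D.V, v ∈ Vsub := by
      intro v hv
      rw [hmem]
      have : π' v = 0 := Ideal.Quotient.eq_zero_iff_mem.mpr hv
      rw [this]; exact zero_mem _
    -- invert elements whose residue falls outside B0
    have hinv : ∀ c : D.V, c ∉ Vsub → ∃ d ∈ Vsub, c * d = 1 := by
      intro c hc'
      have hc0 : π' c ≠ 0 := fun h => hc' ((hmem c).mpr (h ▸ zero_mem _))
      have hcm : c ∉ IsLocalRing.maximalIdeal D.V :=
        fun h => hc0 (Ideal.Quotient.eq_zero_iff_mem.mpr h)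
      have hcu : IsUnit c := by
        by_contra h
        exact hcm ((IsLocalRing.mem_maximalIdeal _).mpr (mem_nonunits_iff.mpr h))
      obtain ⟨u, rfl⟩ := hcu
      refine ⟨(u⁻¹ : D.Vˣ), ?_, u.mul_inv⟩
      rw [hmem]
      rcases B0.mem_or_inv_mem (π' u) with h | h
      · exact absurd ((hmem u).mpr h) hc'
      · have heq : (π' ((u : D.V)))⁻¹ = π' ((u⁻¹ : D.Vˣ) : D.V) := by
          refine inv_eq_of_mul_eq_one_right ?_
          rw [← map_mul, u.mul_inv, map_one]
        rwa [heq] at h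
    haveI : PreValuationRing Vsub := by
      constructor
      intro a b
      obtain ⟨c, hc | hc⟩ := ValuationRing.cond (a : D.V) (b : D.V)
      · by_cases hcV : c ∈ Vsub
        · exact ⟨⟨c, hcV⟩, Or.inl (Subtype.ext hc)⟩
        · obtain ⟨d, hd, hcd⟩ := hinv c hcV
          refine ⟨⟨d, hd⟩, Or.inr (Subtype.ext ?_)⟩
          show (b : D.V) * d = a
          have h2 : (b : D.V) * d = (a : D.V) * (c * d) := by rw [← hc]; ring
          rw [h2, hcd, mul_one]
      · by_cases hcV : c ∈ Vsub
        · exact ⟨⟨c, hcV⟩, Or.inr (Subtype.ext hc)⟩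
        · obtain ⟨d, hd, hcd⟩ := hinv c hcV
          refine ⟨⟨d, hd⟩, Or.inl (Subtype.ext ?_)⟩
          show (a : D.V) * d = b
          have h2 : (a : D.V) * d = (b : D.V) * (c * d) := by rw [← hc]; ring
          rw [h2, hcd, mul_one]
    haveI : ValuationRing Vsub := ⟨⟩
    letI : IsLocalRing Vsub := ValuationRing.isLocalRing Vsub
    let ρ : R →+* Vsub := D.ρ.codRestrict Vsub (fun r => (hmem _).mpr (hAB r))
    let ι : Vsub →+* D.V := Vsub.subtype
    -- the element of L = ofPrime A P' corresponding to r
    have key : ∀ r : R, (r ∈ p 0 ↔ ¬ IsUnit (ρ r)) := by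
      intro r
      constructor
      · intro hr hu
        obtain ⟨w, hw⟩ := isUnit_iff_exists_inv.mp hu
        -- in B0
        have hw1 : (D.ρ r) * (w : D.V) = 1 := congrArg Subtype.val hw
        have hw2 : ρ'' r * π' (w : D.V) = 1 := by
          rw [show ρ'' r = π' (D.ρ r) from rfl, ← map_mul, hw1, map_one]
        have haB : IsUnit (⟨ρ'' r, hAB r⟩ : B0.toSubring) :=
          isUnit_iff_exists_inv.mpr ⟨⟨π' (w : D.V), (hmem _).mp w.2⟩, Subtype.ext hw2⟩
        have haL : IsUnit (⟨ρ'' r, hAL ⟨r, rfl⟩⟩ : (LocalSubring.ofPrime A P').toSubring) := by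
          apply hB0loc.1
          have he : Subring.inclusion hB0le (⟨ρ'' r, hAL ⟨r, rfl⟩⟩ :
              (LocalSubring.ofPrime A P').toSubring) = ⟨ρ'' r, hAB r⟩ := Subtype.ext rfl
          rw [he]
          exact haB
        have hmem2 := (IsLocalization.AtPrime.isUnit_to_map_iff
          (LocalSubring.ofPrime A P').toSubring P' (ρ''.rangeRestrict r)).mp (by
            have he : (algebraMap A (LocalSubring.ofPrime A P').toSubring)
                (ρ''.rangeRestrict r) = ⟨ρ'' r, hAL ⟨r, rfl⟩⟩ := Subtype.ext rfl
            rw [he]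
            exact haL)
        exact hmem2 (Ideal.mem_map_of_mem _ hr)
      · intro hnu
        by_contra hr
        apply hnu
        have hnP' : ρ''.rangeRestrict r ∉ P' := fun h => hr (hcomapP' ▸ h : r ∈ _)
        have haL : IsUnit ((algebraMap A (LocalSubring.ofPrime A P').toSubring)
            (ρ''.rangeRestrict r)) :=
          (IsLocalization.AtPrime.isUnit_to_map_iff _ P' _).mpr hnP'
        have haB : IsUnit (⟨ρ'' r, hAB r⟩ : B0.toSubring) := by
          have hmm := haL.map (Subring.inclusion hB0le)
          have he : Subring.inclusion hB0le ((algebraMap A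
              (LocalSubring.ofPrime A P').toSubring) (ρ''.rangeRestrict r)) =
              ⟨ρ'' r, hAB r⟩ := Subtype.ext rfl
          rwa [he] at hmm
        obtain ⟨w, hw⟩ := isUnit_iff_exists_inv.mp haB
        have hw1 : ρ'' r * (w : k') = 1 := congrArg Subtype.val hw
        have hr0 : ρ'' r ≠ 0 := fun h => by simp [h] at hw1
        have hrm : D.ρ r ∉ IsLocalRing.maximalIdeal D.V :=
          fun h => hr0 (Ideal.Quotient.eq_zero_iff_mem.mpr h)
        have hru : IsUnit (D.ρ r) := by
          by_contra h
          exact hrm ((IsLocalRing.mem_maximalIdeal _).mpr (mem_nonunits_iff.mpr h))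
        obtain ⟨u, hu⟩ := hru
        have hπinv : π' ((u⁻¹ : D.Vˣ) : D.V) = w := by
          have h1 : ρ'' r * π' ((u⁻¹ : D.Vˣ) : D.V) = 1 := by
            rw [show ρ'' r = π' (D.ρ r) from rfl, ← map_mul, ← hu, u.mul_inv, map_one]
          exact mul_left_cancel₀ hr0 (h1.trans hw1.symm)
        refine isUnit_iff_exists_inv.mpr ⟨⟨(u⁻¹ : D.Vˣ), ?_⟩, Subtype.ext ?_⟩
        · rw [hmem, hπinv]; exact w.2
        · show (D.ρ r) * ((u⁻¹ : D.Vˣ) : D.V) = 1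
          rw [← hu, u.mul_inv]
    refine ⟨{
      V := Vsub
      ρ := ρ
      P := Fin.cases (IsLocalRing.maximalIdeal Vsub) (fun i => (D.P i).comap ι)
      prime := ?_
      chain := ?_
      comap_eq := ?_
      htop := ?_ }⟩
    · intro i
      rcases Fin.eq_zero_or_eq_succ i with rfl | ⟨i', rfl⟩
      · simp only [Fin.cases_zero]
        exact (IsLocalRing.maximalIdeal.isMaximal Vsub).isPrime
      · simp only [Fin.cases_succ]
        haveI := D.prime i'
        exact Ideal.IsPrime.comap ι
    · intro i j hij
      rcases Fin.eq_zero_or_eq_succ i with rfl | ⟨i', rfl⟩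
      · simp only [Fin.cases_zero]
        rcases Fin.eq_zero_or_eq_succ j with rfl | ⟨j', rfl⟩
        · simp only [Fin.cases_zero]
          exact le_rfl
        · simp only [Fin.cases_succ]
          haveI := D.prime j'
          exact IsLocalRing.le_maximalIdeal (Ideal.IsPrime.comap ι (hK := D.prime j')).ne_top
      · rcases Fin.eq_zero_or_eq_succ j with rfl | ⟨j', rfl⟩
        · exfalso
          rw [Fin.le_def] at hij
          simp at hij
        · simp only [Fin.cases_succ]
          exact Ideal.comap_mono (D.chain i' j' (by rwa [Fin.succ_le_succ_iff] at hij))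
    · intro i
      rcases Fin.eq_zero_or_eq_succ i with rfl | ⟨i', rfl⟩
      · simp only [Fin.cases_zero]
        ext r
        rw [Ideal.mem_comap, IsLocalRing.mem_maximalIdeal, mem_nonunits_iff]
        exact (key r).symm
      · simp only [Fin.cases_succ]
        rw [Ideal.comap_comap]
        have he : ι.comp ρ = D.ρ := RingHom.ext fun r => rfl
        rw [he]
        exact D.comap_eq i'
    · intro h
      simp only [Fin.mk_zero, Fin.cases_zero]

end ChainVR

section LB

set_option synthInstance.maxHeartbeats 1000000 in
set_option maxHeartbeats 1000000 in
/-- Given a ring `B` over a valuation ring `V` with primes `Q' ≤ Q` contracting to `⊥` and the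
maximal ideal respectively, every chain of primes of `V` is the contraction of a chain in `B`. -/
lemma exists_prime_chain_comap {V B : Type u} [CommRing V] [IsDomain V] [ValuationRing V]
    [CommRing B] (α : V →+* B) (Q Q' : Ideal B) (hQ : Q.IsPrime) (hQ' : Q'.IsPrime)
    (hle : Q' ≤ Q) (h1 : Q'.comap α = ⊥)
    (h2 : Q.comap α = IsLocalRing.maximalIdeal V)
    {k : ℕ} (P : Fin k → Ideal V) (hP : ∀ i, (P i).IsPrime)
    (hPc : ∀ i j : Fin k, i ≤ j → P j ≤ P i) :
    ∃ s : Fin k → Ideal B, (∀ i, (s i).IsPrime) ∧ (∀ i j : Fin k, i ≤ j → s j ≤ s i) ∧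
      ∀ i, (s i).comap α = P i := by
  haveI := hQ
  haveI := hQ'
  letI : IsLocalRing V := ValuationRing.isLocalRing V
  let Bq := B ⧸ Q'
  let mk : B →+* Bq := Ideal.Quotient.mk Q'
  let P1 : Ideal Bq := Q.map mk
  haveI hP1 : P1.IsPrime := by
    refine Ideal.map_isPrime_of_surjective Ideal.Quotient.mk_surjective ?_
    rw [Ideal.mk_ker]
    exact hle
  have hcomapP1 : P1.comap mk = Q := by
    rw [Ideal.comap_map_of_surjective _ Ideal.Quotient.mk_surjective]
    refine sup_eq_left.mpr ?_
    rw [← RingHom.ker_eq_comap_bot, Ideal.mk_ker]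
    exact hle
  let A1 := Localization.AtPrime P1
  haveI : IsDomain A1 := IsLocalization.isDomain_of_local_atPrime hP1
  let F := FractionRing A1
  letI : Algebra A1 F := OreLocalization.instAlgebra
  obtain ⟨W0, hW0le, hW0loc⟩ :=
    (LocalSubring.range (algebraMap A1 F)).exists_le_valuationSubring
  have hle2 : ∀ a : A1, algebraMap A1 F a ∈ W0.toSubring := by
    intro a
    exact hW0le (by exact ⟨a, rfl⟩)
  let θ : B →+* F := (algebraMap A1 F).comp ((algebraMap Bq A1).comp mk)
  let β : B →+* W0 := θ.codRestrict W0.toSubring (fun x => hle2 _)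
  let h : V →+* W0 := β.comp α
  have hBqinj : Function.Injective (algebraMap Bq A1) :=
    IsLocalization.injective A1 P1.primeCompl_le_nonZeroDivisors
  have hinj : Function.Injective h := by
    rw [injective_iff_map_eq_zero]
    intro v hv
    have hv0 : θ (α v) = 0 := congrArg Subtype.val hv
    have : algebraMap Bq A1 (mk (α v)) = 0 := by
      apply IsFractionRing.injective A1 F
      rw [map_zero]
      exact hv0
    have : mk (α v) = 0 := by
      apply hBqinj
      rw [map_zero]
      exact this
    have : α v ∈ Q' := Ideal.Quotient.eq_zero_iff_mem.mp this
    have : v ∈ Q'.comap α := this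
    rw [h1] at this
    simpa using this
  -- the range local subring and inclusions
  have hloc : IsLocalHom h := by
    constructor
    intro v hv
    by_contra hvu
    have hvm : v ∈ IsLocalRing.maximalIdeal V :=
      (IsLocalRing.mem_maximalIdeal _).mpr (mem_nonunits_iff.mpr hvu)
    have hαv : α v ∈ Q := by rw [← h2] at hvm; exact hvm
    have ha1 : algebraMap Bq A1 (mk (α v)) ∈ IsLocalRing.maximalIdeal A1 :=
      (IsLocalization.AtPrime.to_map_mem_maximal_iff A1 P1 _).mpr (Ideal.mem_map_of_mem _ hαv)
    have hnu : ¬ IsUnit (algebraMap Bq A1 (mk (α v))) :=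
      fun hu => ((IsLocalRing.mem_maximalIdeal _).mp ha1) hu
    apply hnu
    -- transfer the unit through the range local subring
    have hloc1 : IsLocalHom ((algebraMap A1 F).rangeRestrict) :=
      IsLocalHom.of_surjective _ (algebraMap A1 F).rangeRestrict_surjective
    have hrange : (LocalSubring.range (algebraMap A1 F)).toSubring =
        (algebraMap A1 F).range := by
      rfl
    have hle3 : (algebraMap A1 F).range ≤ W0.toSubring := hrange ▸ hW0le
    have hloc2 : IsLocalHom (Subring.inclusion hle3) := hW0loc
    have heq : Subring.inclusion hle3 ((algebraMap A1 F).rangeRestrict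
        (algebraMap Bq A1 (mk (α v)))) = h v := Subtype.ext rfl
    have : IsUnit (Subring.inclusion hle3 ((algebraMap A1 F).rangeRestrict
        (algebraMap Bq A1 (mk (α v))))) := heq ▸ hv
    exact hloc1.1 _ (hloc2.1 _ this)
  -- pull back the canonical primes of W0
  refine ⟨fun i => (((P i).map h).radical.comap β), ?_, ?_, ?_⟩
  · intro i
    haveI := (ValuationRing.radical_map_isPrime_and_comap h hinj hloc (P i) (hP i)).1
    exact Ideal.IsPrime.comap β
  · intro i j hij
    exact Ideal.comap_mono (Ideal.radical_mono (Ideal.map_mono (hPc i j hij)))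
  · intro i
    rw [Ideal.comap_comap]
    exact (ValuationRing.radical_map_isPrime_and_comap h hinj hloc (P i) (hP i)).2

end LB

end AuxiliaryLemmas

/-- A finite chain of points under specialization in the target of a universally
subtrusive morphism of schemes lifts to a chain in the source. -/
theorem stmt13 {X Y : Scheme.{u}} (f : X ⟶ Y) (hf : Subtrusive.universally f)
    (n : ℕ) (y : Fin n → Y) (hchain : ∀ i j : Fin n, i ≤ j → y j ⤳ y i) :
    ∃ x : Fin n → X, (∀ i j : Fin n, i ≤ j → x j ⤳ x i) ∧
      ∀ i : Fin n, f.base (x i) = y i := by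
  rcases n with _ | m
  · exact ⟨Fin.elim0, fun i => i.elim0, fun i => i.elim0⟩
  -- Step 1: an affine chart of Y around `y 0` contains the whole chain.
  let R : CommRingCat := (Y.local_affine (Y.affineCover.idx (y 0))).choose_spec.choose
  let jY : Spec R ⟶ Y := Y.affineCover.f (Y.affineCover.idx (y 0))
  haveI : IsOpenImmersion jY := Y.affineCover.map_prop _
  have hy0 : y 0 ∈ Set.range jY.base := Y.affineCover.covers (y 0)
  have hyr : ∀ i, y i ∈ Set.range jY.base := fun i =>
    (hchain 0 i (Fin.zero_le i)).mem_open jY.isOpenEmbedding.isOpen_range hy0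
  choose z hz using hyr
  let z' : Fin (m + 1) → PrimeSpectrum R := z
  have hzspec : ∀ i j : Fin (m + 1), i ≤ j → z' j ⤳ z' i := by
    intro i j hij
    have h1 : jY.base (z j) ⤳ jY.base (z i) := by
      rw [hz i, hz j]; exact hchain i j hij
    exact jY.isOpenEmbedding.toIsInducing.specializes_iff.mp h1
  let p : Fin (m + 1) → Ideal R := fun i => (z' i).asIdeal
  have hp : ∀ i, (p i).IsPrime := fun i => (z' i).isPrime
  have hpc : ∀ i j : Fin (m + 1), i ≤ j → p j ≤ p i := fun i j hij =>
    (PrimeSpectrum.le_iff_specializes _ _).mpr (hzspec i j hij)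
  -- Step 2: a valuation ring over the chain of primes.
  obtain ⟨D⟩ := ChainVR.exists_chainVR m p hp hpc
  letI : IsLocalRing D.V := ValuationRing.isLocalRing D.V
  let ρc : R ⟶ CommRingCat.of D.V := CommRingCat.ofHom D.ρ
  let g : Spec (CommRingCat.of D.V) ⟶ Y := Spec.map ρc ≫ jY
  -- Step 3: base change to the valuation ring; lift the generic/special pair.
  have hsub : Subtrusive (Limits.pullback.snd f g) :=
    hf (Limits.pullback.fst f g) g (Limits.pullback.snd f g) (IsPullback.of_hasPullback f g).flip
  let mV : PrimeSpectrum D.V :=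
    ⟨IsLocalRing.maximalIdeal D.V, (IsLocalRing.maximalIdeal.isMaximal _).isPrime⟩
  let gV : PrimeSpectrum D.V := ⟨⊥, Ideal.bot_prime⟩
  have hgm : (gV : Spec (CommRingCat.of D.V)) ⤳ (mV : Spec (CommRingCat.of D.V)) :=
    (PrimeSpectrum.le_iff_specializes gV mV).mp bot_le
  obtain ⟨w, w', hww', hw, hw'⟩ := hsub.1 mV gV hgm
  -- Step 4: an affine chart of the Limits.pullback around w; w' is in it.
  let B : CommRingCat := ((Limits.pullback f g).local_affine ((Limits.pullback f g).affineCover.idx w)).choose_spec.choose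
  let jP : Spec B ⟶ Limits.pullback f g := (Limits.pullback f g).affineCover.f ((Limits.pullback f g).affineCover.idx w)
  haveI : IsOpenImmersion jP := (Limits.pullback f g).affineCover.map_prop _
  obtain ⟨b0, hb0⟩ := (Limits.pullback f g).affineCover.covers w
  let b : PrimeSpectrum B := b0
  have hb : jP.base b = w := hb0
  have hbw' : w' ∈ Set.range jP.base :=
    hww'.mem_open jP.isOpenEmbedding.isOpen_range ⟨b, hb⟩
  obtain ⟨b', hb'⟩ := hbw'
  have hbspec : (b' : PrimeSpectrum B) ⤳ (b : PrimeSpectrum B) := by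
    have h1 : jP.base b' ⤳ jP.base b := by rw [hb, hb']; exact hww'
    exact jP.isOpenEmbedding.toIsInducing.specializes_iff.mp h1
  -- Step 5: the ring map V → B underlying the chart of the Limits.pullback.
  obtain ⟨ψ, hψ⟩ := Scheme.Spec.map_surjective
    (X := Opposite.op B) (Y := Opposite.op (CommRingCat.of D.V)) (jP ≫ Limits.pullback.snd f g)
  let α : D.V →+* B := ψ.unop.hom
  have hbase : ∀ q : PrimeSpectrum B,
      (jP ≫ Limits.pullback.snd f g).base q = PrimeSpectrum.comap α q := by
    intro q
    rw [← hψ]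
    rfl
  have hQ2 : Ideal.comap α (b : PrimeSpectrum B).asIdeal = IsLocalRing.maximalIdeal D.V := by
    have h1 : (jP ≫ Limits.pullback.snd f g).base b = mV := by
      show (Limits.pullback.snd f g).base (jP.base b) = mV
      rw [hb, hw]
    rw [hbase b] at h1
    exact congrArg PrimeSpectrum.asIdeal h1
  have hQ1 : Ideal.comap α (b' : PrimeSpectrum B).asIdeal = ⊥ := by
    have h1 : (jP ≫ Limits.pullback.snd f g).base b' = gV := by
      show (Limits.pullback.snd f g).base (jP.base b') = gV
      rw [hb', hw']
    rw [hbase b'] at h1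
    exact congrArg PrimeSpectrum.asIdeal h1
  -- Step 6: chain of primes in B over the chain in V.
  obtain ⟨s, hsp, hsc, hscomap⟩ := exists_prime_chain_comap α
    (b : PrimeSpectrum B).asIdeal (b' : PrimeSpectrum B).asIdeal
    (b : PrimeSpectrum B).isPrime (b' : PrimeSpectrum B).isPrime
    ((PrimeSpectrum.le_iff_specializes _ _).mpr hbspec) hQ1 hQ2 D.P D.prime D.chain
  -- Step 7: transport the chain to X.
  let pt : Fin (m + 1) → PrimeSpectrum B := fun i => ⟨s i, hsp i⟩
  refine ⟨fun i => (jP ≫ Limits.pullback.fst f g).base (pt i), ?_, ?_⟩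
  · intro i j hij
    have h1 : pt j ⤳ pt i := (PrimeSpectrum.le_iff_specializes _ _).mp (hsc i j hij)
    exact h1.map (jP ≫ Limits.pullback.fst f g).base.hom.continuous
  · intro i
    have h1 : f.base ((jP ≫ Limits.pullback.fst f g).base (pt i)) =
        g.base ((jP ≫ Limits.pullback.snd f g).base (pt i)) := by
      show ((jP ≫ Limits.pullback.fst f g) ≫ f).base (pt i) =
        ((jP ≫ Limits.pullback.snd f g) ≫ g).base (pt i)
      congr 1
      rw [Category.assoc, Category.assoc, Limits.pullback.condition]
    rw [h1, hbase (pt i)]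
    have h2 : PrimeSpectrum.comap α (pt i) = (⟨D.P i, D.prime i⟩ : PrimeSpectrum D.V) := by
      apply PrimeSpectrum.ext
      exact hscomap i
    rw [h2]
    show jY.base ((Spec.map ρc).base _) = y i
    have h3 : (Spec.map ρc).base (⟨D.P i, D.prime i⟩ : PrimeSpectrum D.V) = z' i := by
      apply PrimeSpectrum.ext
      exact D.comap_eq i
    rw [h3]
    exact hz i
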